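/- For every (x_1, ..., x_p) ∈ ℝ^p, ∫_ℝ g(ξ, x_1, ..., x_p) dξ = ∫_ℝ g(x_1, ..., x_p, ξ) dξ. That is, under periodic extension of the training data, the p-dimensional marginal of the joint KDE obtained by integrating out the first coordinate coincides with the marginal obtained by integrating out the last coordinate, so all p-dimensional marginal distributions of the joint KDE are identical under time shift. -/

import Mathlib

open MeasureTheory Finset

/-- The normalized kernel integrates to one. -/
lemma kde_aux_integral {k : ℝ → ℝ} (hk_int : ∫ r : ℝ, k r = 1)
    {h : ℝ} (hh : 0 < h) (c : ℝ) :
    ∫ ξ : ℝ, (1 / h) * k ((ξ - c) / h) = 1 := by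
  rw [integral_const_mul]
  have h1 : (∫ ξ : ℝ, k ((ξ - c) / h)) = ∫ ξ : ℝ, k (ξ / h) :=
    integral_sub_right_eq_self (fun ξ => k (ξ / h)) c
  rw [h1, Measure.integral_comp_div k h, hk_int, smul_eq_mul, mul_one, abs_of_pos hh,
    one_div, inv_mul_cancel₀ hh.ne']

lemma kde_aux_integrable {k : ℝ → ℝ} (hk : Integrable k) {h : ℝ} (hh : 0 < h) (c : ℝ) :
    Integrable (fun ξ : ℝ => (1 / h) * k ((ξ - c) / h)) := by
  refine Integrable.const_mul ?_ _
  have : Integrable (fun ξ : ℝ => k (ξ / h)) := hk.comp_div hh.ne'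
  exact this.comp_sub_right c

lemma kde_aux_shift_sum {N : ℕ} (F : ℤ → ℝ) (hF : F ((N : ℤ) + 1) = F 1) :
    ∑ n ∈ Finset.Icc 1 N, F ((n : ℤ) + 1) = ∑ n ∈ Finset.Icc 1 N, F (n : ℤ) := by
  have h1 : ∀ f : ℕ → ℝ, ∑ n ∈ Finset.Icc 1 N, f n = ∑ i ∈ Finset.range N, f (1 + i) := by
    intro f
    rw [← Finset.Ico_add_one_right_eq_Icc, Finset.sum_Ico_eq_sum_range]
    simp
  rw [h1 (fun n => F ((n : ℤ) + 1)), h1 (fun n => F (n : ℤ))]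
  have hs := Finset.sum_range_succ (fun j : ℕ => F ((1 + j : ℕ) : ℤ)) N
  have hs' := Finset.sum_range_succ' (fun j : ℕ => F ((1 + j : ℕ) : ℤ)) N
  have hend : F ((1 + N : ℕ) : ℤ) = F ((1 + 0 : ℕ) : ℤ) := by
    push_cast
    rw [add_comm (1 : ℤ) (N : ℤ)]
    simpa using hF
  rw [hs, hend] at hs'
  have h2 : ∀ i : ℕ, F (((1 + i : ℕ) : ℤ) + 1) = (fun j : ℕ => F ((1 + j : ℕ) : ℤ)) (i + 1) := by
    intro i
    have e : ((1 + i : ℕ) : ℤ) + 1 = ((1 + (i + 1) : ℕ) : ℤ) := by push_cast; ring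
    simp only [e]
  calc ∑ i ∈ Finset.range N, F (((1 + i : ℕ) : ℤ) + 1)
      = ∑ i ∈ Finset.range N, (fun j : ℕ => F ((1 + j : ℕ) : ℤ)) (i + 1) :=
        Finset.sum_congr rfl fun i _ => h2 i
    _ = ∑ i ∈ Finset.range N, F ((1 + i : ℕ) : ℤ) := by
        simp only [] at hs' ⊢
        linarith

open MeasureTheory Finset in
/-- Under periodic extension of the training data, the `p`-dimensional marginal of the
joint KDE obtained by integrating out the first coordinate coincides with the marginal
obtained by integrating out the last coordinate: all `p`-dimensional marginals of the
joint KDE are identical under time shift. -/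
theorem periodic_kde_marginals_shift_invariant
    (p N : ℕ) (hp : 1 ≤ p) (hN : 1 ≤ N)
    (y : ℤ → ℝ) (hy_per : ∀ n : ℤ, y (n + N) = y n)
    (h : ℝ) (hh : 0 < h)
    (k : ℝ → ℝ) (hk_meas : Measurable k) (hk_nonneg : ∀ r, 0 ≤ k r)
    (hk_int : ∫ r : ℝ, k r = 1) :
    let g : (Fin (p + 1) → ℝ) → ℝ := fun x =>
      (1 / (N : ℝ)) * ∑ n ∈ Finset.Icc 1 N,
        ∏ j : Fin (p + 1), (1 / h) * k ((x j - y ((n : ℤ) - (p + 1) + ((j : ℕ) + 1))) / h)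
    ∀ x : Fin p → ℝ,
      (∫ ξ : ℝ, g (Fin.cons ξ x)) = ∫ ξ : ℝ, g (Fin.snoc x ξ) := by
  intro g x
  have hk_i : Integrable k := by
    by_contra hc
    rw [integral_undef hc] at hk_int
    norm_num at hk_int
  set F : ℤ → ℝ := fun m =>
    ∏ i : Fin p, (1 / h) * k ((x i - y (m - (p + 1) + ((i : ℕ) + 1))) / h) with hF_def
  -- rewrite g on cons
  have hg_cons : ∀ ξ : ℝ, g (Fin.cons ξ x) =
      (1 / (N : ℝ)) * ∑ n ∈ Finset.Icc 1 N,
        ((1 / h) * k ((ξ - y ((n : ℤ) - (p + 1) + 1)) / h)) * F ((n : ℤ) + 1) := by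
    intro ξ
    simp only [g]
    congr 1
    refine Finset.sum_congr rfl fun n _ => ?_
    rw [Fin.prod_univ_succ]
    refine congrArg₂ (· * ·) ?_ ?_
    · simp
    · simp only [hF_def]
      refine Finset.prod_congr rfl fun i _ => ?_
      simp only [Fin.cons_succ, Fin.val_succ]
      push_cast
      rw [show (n : ℤ) - ((p : ℤ) + 1) + (((i : ℕ) : ℤ) + 1 + 1)
            = (n : ℤ) + 1 - ((p : ℤ) + 1) + (((i : ℕ) : ℤ) + 1) from by ring]
  have hg_snoc : ∀ ξ : ℝ, g (Fin.snoc x ξ) =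
      (1 / (N : ℝ)) * ∑ n ∈ Finset.Icc 1 N,
        ((1 / h) * k ((ξ - y (n : ℤ)) / h)) * F (n : ℤ) := by
    intro ξ
    simp only [g]
    congr 1
    refine Finset.sum_congr rfl fun n _ => ?_
    rw [Fin.prod_univ_castSucc, mul_comm]
    refine congrArg₂ (· * ·) ?_ ?_
    · simp only [Fin.snoc_last, Fin.val_last]
      rw [show (n : ℤ) - ((p : ℤ) + 1) + (((p : ℕ) : ℤ) + 1) = (n : ℤ) from by ring]
    · simp only [hF_def]
      refine Finset.prod_congr rfl fun i _ => ?_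
      simp only [Fin.snoc_castSucc, Fin.coe_castSucc]
  -- compute both integrals
  have key : ∀ b c : ℕ → ℝ,
      (∫ ξ : ℝ, (1 / (N : ℝ)) * ∑ n ∈ Finset.Icc 1 N,
        ((1 / h) * k ((ξ - b n) / h)) * c n) =
      (1 / (N : ℝ)) * ∑ n ∈ Finset.Icc 1 N, c n := by
    intro b c
    rw [integral_const_mul]
    congr 1
    rw [integral_finset_sum _ (fun n _ => (kde_aux_integrable hk_i hh (b n)).mul_const (c n))]
    refine Finset.sum_congr rfl fun n _ => ?_
    rw [integral_mul_const, kde_aux_integral hk_int hh (b n), one_mul]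
  have hshift : ∑ n ∈ Finset.Icc 1 N, F ((n : ℤ) + 1) = ∑ n ∈ Finset.Icc 1 N, F (n : ℤ) := by
    refine kde_aux_shift_sum F ?_
    simp only [hF_def]
    refine Finset.prod_congr rfl fun i _ => ?_
    rw [show ((N : ℤ) + 1) - ((p : ℤ) + 1) + (((i : ℕ) : ℤ) + 1)
          = ((1 : ℤ) - ((p : ℤ) + 1) + (((i : ℕ) : ℤ) + 1)) + (N : ℤ) from by ring, hy_per]
  calc (∫ ξ : ℝ, g (Fin.cons ξ x))
      = ∫ ξ : ℝ, (1 / (N : ℝ)) * ∑ n ∈ Finset.Icc 1 N,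
          ((1 / h) * k ((ξ - y ((n : ℤ) - (p + 1) + 1)) / h)) * F ((n : ℤ) + 1) := by
        exact integral_congr_ae (Filter.Eventually.of_forall hg_cons)
    _ = (1 / (N : ℝ)) * ∑ n ∈ Finset.Icc 1 N, F ((n : ℤ) + 1) :=
        key (fun n => y ((n : ℤ) - (p + 1) + 1)) (fun n => F ((n : ℤ) + 1))
    _ = (1 / (N : ℝ)) * ∑ n ∈ Finset.Icc 1 N, F (n : ℤ) := by rw [hshift]
    _ = ∫ ξ : ℝ, (1 / (N : ℝ)) * ∑ n ∈ Finset.Icc 1 N,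
          ((1 / h) * k ((ξ - y (n : ℤ)) / h)) * F (n : ℤ) :=
        (key (fun n => y (n : ℤ)) (fun n => F (n : ℤ))).symm
    _ = ∫ ξ : ℝ, g (Fin.snoc x ξ) :=
        integral_congr_ae (Filter.Eventually.of_forall fun ξ => (hg_snoc ξ).symm)
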